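/- arXiv:1504.04201 — 3 statements merged into one kernel-verified Lean document; each statement's English description precedes it below -/
import Mathlib

section
/- Let m ≥ n−2 and let f = x_0^{a_0} x_1^{a_1} ⋯ x_{n+1}^{a_{n+1}} be a monomial with f ∈ I_{B_n}^{(m)}. Define g = x_0^{b_0} x_1^{b_1} ⋯ x_{n+1}^{b_{n+1}} where b_0 = a_0, b_{n+1} = a_{n+1}, and b_i = max{a_i − 1, 0} for i = 1, …, n. Then g ∈ I_{B_n}^{(m−(n−2))}. -/
open MvPolynomial
open Fin.NatCast

/-- The subtree (arc) of `n-2` consecutive cycle vertices of the `n`-cycle `Q_n`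
(on vertices `1,…,n` inside `Fin (n+2)`), starting at vertex `i+1`, for `i = 0,…,n-1`.
The family `arcT n i`, `i < n`, is exactly the family `𝒯` of subtrees of `Q_n`
with `n-2` vertices. -/
def arcT (n i : ℕ) : Finset (Fin (n + 2)) :=
  (Finset.range (n - 2)).image fun t => (((i + t) % n + 1 : ℕ) : Fin (n + 2))

/-- The monomial prime ideal `⟨x_v⟩ + ⟨x_j : j ∈ S⟩`. -/
noncomputable def apexIdeal (K : Type*) [Field K] (n : ℕ) (v : Fin (n + 2))
    (S : Finset (Fin (n + 2))) : Ideal (MvPolynomial (Fin (n + 2)) K) :=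
  Ideal.span (insert (X v) (X '' (S : Set (Fin (n+2))) : Set (MvPolynomial (Fin (n + 2)) K)))

/-- The `m`-th symbolic power `I_{B_n}^{(m)} = ⋂_{S ∈ 𝒯} (I_{[0,S]}^m ∩ I_{[n+1,S]}^m)`. -/
noncomputable def symbPow (K : Type*) [Field K] (n m : ℕ) : Ideal (MvPolynomial (Fin (n + 2)) K) :=
  ⨅ i ∈ Finset.range n,
    apexIdeal K n 0 (arcT n i) ^ m ⊓ apexIdeal K n ((n + 1 : ℕ) : Fin (n + 2)) (arcT n i) ^ m

/-- The monomial `x_0^{a_0} x_1^{a_1} ⋯ x_{n+1}^{a_{n+1}}`. -/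
noncomputable def monom (K : Type*) [Field K] (n : ℕ) (a : Fin (n + 2) → ℕ) :
    MvPolynomial (Fin (n + 2)) K :=
  ∏ i, X i ^ a i

/-- `α_{n,m}`: the least total degree of a monomial lying in `I_{B_n}^{(m)}`. -/
noncomputable def alphaSymb (K : Type*) [Field K] (n m : ℕ) : ℕ :=
  sInf {d | ∃ a : Fin (n + 2) → ℕ, (∑ i, a i) = d ∧ monom K n a ∈ symbPow K n m}

/-- The Stanley–Reisner ideal `I_{B_n}` of the bipyramid `B_n`, presented by its
quadratic generators: `x_0 x_{n+1}` together with `x_i x_j` for non-adjacent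
vertices `i, j` of the cycle `Q_n`. -/
noncomputable def bipyrIdeal (K : Type*) [Field K] (n : ℕ) : Ideal (MvPolynomial (Fin (n + 2)) K) :=
  Ideal.span ({X (0 : Fin (n + 2)) * X ((n + 1 : ℕ) : Fin (n + 2))} ∪
    {p | ∃ i j : ℕ, 1 ≤ i ∧ i ≤ n ∧ 1 ≤ j ∧ j ≤ n ∧ i ≠ j ∧
      j ≠ i % n + 1 ∧ i ≠ j % n + 1 ∧
      p = X ((i : ℕ) : Fin (n + 2)) * X ((j : ℕ) : Fin (n + 2))})

section MonomMem
variable {K : Type*} [Field K] {σ : Type*} [Fintype σ] [DecidableEq σ]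

lemma monom_mem_pow_span_iff (T : Finset σ) (a : σ → ℕ) (m : ℕ) :
    (∏ i, (X i : MvPolynomial σ K) ^ a i) ∈ Ideal.span (X '' (T : Set σ)) ^ m ↔
      m ≤ ∑ j ∈ T, a j := by
  constructor
  · intro h
    set φ : MvPolynomial σ K →ₐ[K] Polynomial K :=
      aeval (fun j => if j ∈ T then Polynomial.X else 1) with hφ
    have h1 : φ (∏ i, X i ^ a i) ∈ (Ideal.map φ (Ideal.span (X '' (T : Set σ)))) ^ m := by
      rw [← Ideal.map_pow]
      exact Ideal.mem_map_of_mem _ h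
    have h2 : Ideal.map φ (Ideal.span (X '' (T : Set σ))) ≤
        Ideal.span {(Polynomial.X : Polynomial K)} := by
      rw [Ideal.map_span]
      apply Ideal.span_le.mpr
      rintro q ⟨p, ⟨j, hj, rfl⟩, rfl⟩
      have hj' : j ∈ T := hj
      have : φ (X j) = Polynomial.X := by simp [hφ, hj']
      rw [this]
      exact Ideal.subset_span rfl
    have h3 : φ (∏ i, X i ^ a i) ∈ Ideal.span {(Polynomial.X : Polynomial K)} ^ m :=
      Ideal.pow_right_mono h2 m h1
    have h4 : φ (∏ i, X i ^ a i) = Polynomial.X ^ (∑ j ∈ T, a j) := by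
      rw [map_prod]
      simp only [map_pow, hφ, aeval_X]
      rw [← Finset.prod_pow_eq_pow_sum]
      rw [← Finset.prod_subset (Finset.subset_univ T)
        (fun x _ hx => by rw [if_neg hx, one_pow])]
      exact Finset.prod_congr rfl fun j hj => by rw [if_pos hj]
    rw [h4, Ideal.span_singleton_pow, Ideal.mem_span_singleton] at h3
    have h5 := Polynomial.natDegree_le_of_dvd h3 (pow_ne_zero _ Polynomial.X_ne_zero)
    simpa using h5
  · induction m generalizing a with
    | zero => intro _; simp
    | succ m ih =>
      intro h
      have hex : ∃ j ∈ T, 0 < a j := by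
        by_contra hc
        push_neg at hc
        have : ∑ j ∈ T, a j = 0 := Finset.sum_eq_zero fun j hj => by
          have := hc j hj; omega
        omega
      obtain ⟨j, hjT, hja⟩ := hex
      have key : (∏ i, (X i : MvPolynomial σ K) ^ a i) =
          X j * ∏ i, X i ^ (Function.update a j (a j - 1)) i := by
        rw [← Finset.mul_prod_erase Finset.univ
            (fun i => (X i : MvPolynomial σ K) ^ a i) (Finset.mem_univ j),
          ← Finset.mul_prod_erase Finset.univ
            (fun i => (X i : MvPolynomial σ K) ^ (Function.update a j (a j - 1)) i)
            (Finset.mem_univ j), ← mul_assoc]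
        congr 1
        · rw [Function.update_self, ← pow_succ']
          congr 1; omega
        · exact Finset.prod_congr rfl fun i hi => by
            rw [Function.update_of_ne (Finset.ne_of_mem_erase hi)]
      have hsum : m ≤ ∑ j' ∈ T, (Function.update a j (a j - 1)) j' := by
        rw [Finset.sum_update_of_mem hjT, Finset.sdiff_singleton_eq_erase]
        have := Finset.add_sum_erase T a hjT
        omega
      rw [key, pow_succ]
      have : (X j : MvPolynomial σ K) * ∏ i, X i ^ (Function.update a j (a j - 1)) i =
          (∏ i, X i ^ (Function.update a j (a j - 1)) i) * X j := mul_comm _ _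
      rw [this]
      exact Ideal.mul_mem_mul (ih _ hsum) (Ideal.subset_span (Set.mem_image_of_mem X hjT))
end MonomMem

lemma apexIdeal_eq (K : Type*) [Field K] (n : ℕ) (v : Fin (n + 2)) (S : Finset (Fin (n + 2))) :
    apexIdeal K n v S = Ideal.span (X '' ((insert v S : Finset (Fin (n+2))) : Set (Fin (n+2)))) := by
  rw [apexIdeal, Finset.coe_insert, Set.image_insert_eq]

lemma arcT_ne {n : ℕ} (hn : 3 ≤ n) {i : ℕ} {j : Fin (n+2)} (hj : j ∈ arcT n i) :
    j ≠ 0 ∧ j ≠ ((n + 1 : ℕ) : Fin (n + 2)) := by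
  simp only [arcT, Finset.mem_image, Finset.mem_range] at hj
  obtain ⟨t, _, rfl⟩ := hj
  have hk : (i + t) % n < n := Nat.mod_lt _ (by omega)
  have hv : (((((i + t) % n + 1 : ℕ)) : Fin (n + 2))).val = (i + t) % n + 1 := by
    rw [Fin.val_natCast, Nat.mod_eq_of_lt (by omega)]
  have hv2 : (((n + 1 : ℕ) : Fin (n + 2))).val = n + 1 := by
    rw [Fin.val_natCast, Nat.mod_eq_of_lt (by omega)]
  constructor
  · intro h
    have := congrArg Fin.val h
    rw [hv] at this
    simp at this
  · intro h
    have := congrArg Fin.val h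
    rw [hv, hv2] at this
    omega

lemma arcT_card_le {n : ℕ} (i : ℕ) : (arcT n i).card ≤ n - 2 :=
  (Finset.card_image_le).trans (by simp)

lemma step {K : Type*} [Field K] {n : ℕ} (hn : 3 ≤ n) {m i : ℕ} (v : Fin (n+2))
    (hv : v = 0 ∨ v = ((n + 1 : ℕ) : Fin (n + 2))) (a : Fin (n + 2) → ℕ)
    (h : monom K n a ∈ apexIdeal K n v (arcT n i) ^ m) :
    monom K n (fun j => if j = 0 ∨ j = ((n + 1 : ℕ) : Fin (n + 2)) then a j else a j - 1)
      ∈ apexIdeal K n v (arcT n i) ^ (m - (n - 2)) := by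
  classical
  set S := arcT n i with hS
  have hvS : v ∉ S := fun hmem => by
    rcases hv with rfl | rfl
    · exact (arcT_ne hn hmem).1 rfl
    · exact (arcT_ne hn hmem).2 rfl
  rw [apexIdeal_eq, monom] at h ⊢
  rw [monom_mem_pow_span_iff] at h ⊢
  rw [Finset.sum_insert hvS] at h ⊢
  set a' : Fin (n + 2) → ℕ :=
    fun j => if j = 0 ∨ j = ((n + 1 : ℕ) : Fin (n + 2)) then a j else a j - 1 with ha'
  have hv' : a' v = a v := by
    rcases hv with rfl | rfl
    · simp [ha']
    · simp [ha']
  have hSsum : ∑ j ∈ S, a j ≤ ∑ j ∈ S, (a' j + 1) := by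
    refine Finset.sum_le_sum fun j hj => ?_
    have := arcT_ne hn hj
    simp only [ha', this.1, this.2, or_self, if_false]
    omega
  rw [Finset.sum_add_distrib, Finset.sum_const, smul_eq_mul, mul_one] at hSsum
  have hcard : S.card ≤ n - 2 := arcT_card_le i
  show m - (n - 2) ≤ a' v + ∑ j ∈ S, a' j
  rw [hv']
  omega


/-- If `m ≥ n - 2` and `f = x_0^{a_0} ⋯ x_{n+1}^{a_{n+1}} ∈ I_{B_n}^{(m)}`, then the
monomial `g` obtained by lowering each cycle exponent `a_i` (`i = 1,…,n`) to
`max {a_i - 1, 0}`, keeping `a_0` and `a_{n+1}`, lies in `I_{B_n}^{(m-(n-2))}`. -/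
theorem lowered_monom_mem_symbPow (K : Type*) [Field K] (n : ℕ) (hn : 3 ≤ n) (m : ℕ)
    (hm : n - 2 ≤ m) (a : Fin (n + 2) → ℕ) (hf : monom K n a ∈ symbPow K n m) :
    monom K n (fun j => if j = 0 ∨ j = ((n + 1 : ℕ) : Fin (n + 2)) then a j else a j - 1)
      ∈ symbPow K n (m - (n - 2)) := by
  simp only [symbPow, Ideal.mem_iInf, Ideal.mem_inf] at hf ⊢
  intro i hi
  obtain ⟨h0, h1⟩ := hf i hi
  exact ⟨step hn 0 (Or.inl rfl) a h0, step hn _ (Or.inr rfl) a h1⟩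
end

section
/- Let k ≥ 2 and n = 2k. The monomials f_1 = x_1 x_3 ⋯ x_{2k−1} and f_2 = x_2 x_4 ⋯ x_{2k} (products of the variables at the odd-indexed, respectively even-indexed, vertices of the cycle Q_{2k}) both belong to I_{B_{2k}}^{(k−1)}; moreover w_S(f_1) = w_S(f_2) = k−1 for every S ∈ 𝒯 (where for a monomial whose x_0- and x_{n+1}-exponents are 0, w_S denotes the common weight Σ_{i∈S} a_i). -/
open MvPolynomial
open Fin.NatCast

lemma prod_pow_mem_pow_sum' {R σ : Type*} [CommRing R] (I : Ideal R)
    (S : Finset σ) (f : σ → R) (a : σ → ℕ) (hf : ∀ j ∈ S, f j ∈ I) :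
    (∏ j ∈ S, f j ^ a j) ∈ I ^ (∑ j ∈ S, a j) := by
  induction S using Finset.cons_induction with
  | empty => simp [Ideal.one_eq_top]
  | cons x s hx ih =>
    rw [Finset.prod_cons, Finset.sum_cons, pow_add]
    exact Ideal.mul_mem_mul (Ideal.pow_mem_pow (hf x (Finset.mem_cons_self _ _)) _)
      (ih fun j hj => hf j (Finset.mem_cons_of_mem hj))

lemma monom_mem_apex_pow' (K : Type*) [Field K] (n : ℕ) (v : Fin (n+2))
    (S : Finset (Fin (n+2))) (a : Fin (n+2) → ℕ) (m : ℕ)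
    (h : m ≤ ∑ j ∈ S, a j) :
    monom K n a ∈ apexIdeal K n v S ^ m := by
  apply Ideal.pow_le_pow_right h
  have hsplit : monom K n a = (∏ j ∈ Sᶜ, X j ^ a j) * ∏ j ∈ S, (X j : MvPolynomial (Fin (n+2)) K) ^ a j := by
    rw [monom, mul_comm, Finset.prod_mul_prod_compl]
  rw [hsplit]
  exact Ideal.mul_mem_left _ _ (prod_pow_mem_pow_sum' _ _ _ _ fun j hj =>
    Ideal.subset_span (Set.mem_insert_iff.mpr (Or.inr ⟨j, Finset.mem_coe.mpr hj, rfl⟩)))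

lemma arc_sum' (k : ℕ) (hk : 1 ≤ k) (i : ℕ) (b : ℕ → ℕ) :
    (∑ j ∈ arcT (2*k) i, b (j : ℕ)) = ∑ t ∈ Finset.range (2*k-2), b ((i+t) % (2*k) + 1) := by
  have hpos : 0 < 2*k := by omega
  rw [arcT, Finset.sum_image ?_]
  · refine Finset.sum_congr rfl fun t ht => ?_
    congr 1
    exact Fin.val_cast_of_lt (by have := Nat.mod_lt (i+t) hpos; omega)
  · intro s hs t ht hst
    have h := congrArg Fin.val hst
    rw [Fin.val_cast_of_lt (by have := Nat.mod_lt (i+s) hpos; omega),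
        Fin.val_cast_of_lt (by have := Nat.mod_lt (i+t) hpos; omega)] at h
    have h2 : (i+s) % (2*k) = (i+t) % (2*k) := by omega
    have hs2 : s < 2*k := by simp only [Finset.mem_coe, Finset.mem_range] at hs; omega
    have ht2 : t < 2*k := by simp only [Finset.mem_coe, Finset.mem_range] at ht; omega
    have h3 : s % (2*k) = t % (2*k) := Nat.ModEq.add_left_cancel' i h2
    rwa [Nat.mod_eq_of_lt hs2, Nat.mod_eq_of_lt ht2] at h3
lemma count_parity' (i m r : ℕ) (hr : r < 2) :
    (∑ t ∈ Finset.range (2*m), if (i+t) % 2 = r then (1:ℕ) else 0) = m := by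
  induction m with
  | zero => simp
  | succ m ih =>
    rw [show 2*(m+1) = 2*m + 1 + 1 by ring, Finset.sum_range_succ, Finset.sum_range_succ, ih]
    split_ifs with h1 h2 <;> omega

/-- For `k ≥ 2` and `n = 2k`, the monomials `f₁ = x_1 x_3 ⋯ x_{2k-1}` and
`f₂ = x_2 x_4 ⋯ x_{2k}` lie in `I_{B_{2k}}^{(k-1)}`, and `w_S(f₁) = w_S(f₂) = k - 1`
for every subtree `S ∈ 𝒯`. -/
theorem even_case_minimal_generators (K : Type*) [Field K] (k : ℕ) (hk : 2 ≤ k) :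
    (monom K (2 * k) (fun j => if (j : ℕ) % 2 = 1 ∧ (j : ℕ) ≤ 2 * k then 1 else 0)
        ∈ symbPow K (2 * k) (k - 1)) ∧
    (monom K (2 * k) (fun j => if (j : ℕ) % 2 = 0 ∧ 1 ≤ (j : ℕ) ∧ (j : ℕ) ≤ 2 * k then 1 else 0)
        ∈ symbPow K (2 * k) (k - 1)) ∧
    ∀ i < 2 * k,
      (∑ j ∈ arcT (2 * k) i,
          (if (j : ℕ) % 2 = 1 ∧ (j : ℕ) ≤ 2 * k then 1 else 0)) = k - 1 ∧
      (∑ j ∈ arcT (2 * k) i,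
          (if (j : ℕ) % 2 = 0 ∧ 1 ≤ (j : ℕ) ∧ (j : ℕ) ≤ 2 * k then 1 else 0)) = k - 1 := by
  have hk1 : 1 ≤ k := by omega
  have hdvd : (2:ℕ) ∣ 2*k := ⟨k, rfl⟩
  have w1 : ∀ i : ℕ, (∑ j ∈ arcT (2 * k) i,
      (if (j : ℕ) % 2 = 1 ∧ (j : ℕ) ≤ 2 * k then 1 else 0)) = k - 1 := by
    intro i
    rw [arc_sum' k hk1 i (fun j => if j % 2 = 1 ∧ j ≤ 2 * k then 1 else 0)]
    have : ∀ t ∈ Finset.range (2*k-2),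
        (if ((i+t) % (2*k) + 1) % 2 = 1 ∧ (i+t) % (2*k) + 1 ≤ 2*k then (1:ℕ) else 0)
          = if (i+t) % 2 = 0 then 1 else 0 := by
      intro t ht
      have hmod : (i+t) % (2*k) % 2 = (i+t) % 2 := Nat.mod_mod_of_dvd _ hdvd
      have hle : (i+t) % (2*k) < 2*k := Nat.mod_lt _ (by omega)
      exact if_congr (by omega) rfl rfl
    rw [Finset.sum_congr rfl this, show 2*k-2 = 2*(k-1) by omega]
    exact count_parity' i (k-1) 0 (by omega)
  have w2 : ∀ i : ℕ, (∑ j ∈ arcT (2 * k) i,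
      (if (j : ℕ) % 2 = 0 ∧ 1 ≤ (j : ℕ) ∧ (j : ℕ) ≤ 2 * k then 1 else 0)) = k - 1 := by
    intro i
    rw [arc_sum' k hk1 i (fun j => if j % 2 = 0 ∧ 1 ≤ j ∧ j ≤ 2 * k then 1 else 0)]
    have : ∀ t ∈ Finset.range (2*k-2),
        (if ((i+t) % (2*k) + 1) % 2 = 0 ∧ 1 ≤ (i+t) % (2*k) + 1 ∧ (i+t) % (2*k) + 1 ≤ 2*k
            then (1:ℕ) else 0)
          = if (i+t) % 2 = 1 then 1 else 0 := by
      intro t ht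
      have hmod : (i+t) % (2*k) % 2 = (i+t) % 2 := Nat.mod_mod_of_dvd _ hdvd
      have hle : (i+t) % (2*k) < 2*k := Nat.mod_lt _ (by omega)
      exact if_congr (by omega) rfl rfl
    rw [Finset.sum_congr rfl this, show 2*k-2 = 2*(k-1) by omega]
    exact count_parity' i (k-1) 1 (by omega)
  refine ⟨?_, ?_, fun i _ => ⟨w1 i, w2 i⟩⟩ <;>
  · refine (Submodule.mem_iInf _).mpr fun i => (Submodule.mem_iInf _).mpr fun _ => ?_
    rw [Submodule.mem_inf]
    constructor <;>
      exact monom_mem_apex_pow' K (2*k) _ (arcT (2*k) i) _ (k-1)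
        (le_of_eq (by first | rw [w1 i] | rw [w2 i]))
end

section
/- (Integer-programming form of the odd case.) Let k ≥ 3, n = 2k−1, and s ≥ 1. The minimum of Σ_{i=0}^{2k} a_i over all tuples a = (a_0, a_1, …, a_{2k}) of non-negative integers satisfying, for every arc S of 2k−3 consecutive vertices of the cycle on {1,…,2k−1}, both a_0 + Σ_{i∈S} a_i ≥ s(2k−3) and a_{2k} + Σ_{i∈S} a_i ≥ s(2k−3), equals s(2k−1). -/
open MvPolynomial
open Fin.NatCast

lemma shift_sum {M : Type*} [AddCommMonoid M] (n t : ℕ) (hn : 0 < n) (f : ℕ → M) :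
    ∑ i ∈ Finset.range n, f ((i + t) % n) = ∑ i ∈ Finset.range n, f i := by
  have hr : t % n < n := Nat.mod_lt _ hn
  apply Finset.sum_nbij' (i := fun a => (a + t) % n) (j := fun a => (a + (n - t % n)) % n)
    <;> intro a ha <;> rw [Finset.mem_range] at ha
  · exact Finset.mem_range.2 (Nat.mod_lt _ hn)
  · exact Finset.mem_range.2 (Nat.mod_lt _ hn)
  · calc ((a+t)%n + (n - t%n)) % n = (a + t + (n - t%n)) % n := by rw [Nat.mod_add_mod]
      _ = (a + t%n + (n - t%n)) % n :=
          Nat.ModEq.add_right _ (Nat.ModEq.add_left a (Nat.mod_modEq t n).symm)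
      _ = (a + n) % n := by congr 1; omega
      _ = a := by rw [Nat.add_mod_right, Nat.mod_eq_of_lt ha]
  · calc ((a + (n - t%n))%n + t) % n = (a + (n - t%n) + t) % n := by rw [Nat.mod_add_mod]
      _ = (a + (n - t%n) + t%n) % n := Nat.ModEq.add_left _ (Nat.mod_modEq t n).symm
      _ = (a + n) % n := by congr 1; omega
      _ = a := by rw [Nat.add_mod_right, Nat.mod_eq_of_lt ha]

lemma val_cast_of_lt' {n v : ℕ} (h : v < n + 2) : ((v : ℕ) : Fin (n+2)).val = v := by
  rw [Fin.val_natCast, Nat.mod_eq_of_lt h]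

lemma arcT_sum (n i : ℕ) (hn : 0 < n) (a : Fin (n+2) → ℕ) :
    ∑ j ∈ arcT n i, a j = ∑ t ∈ Finset.range (n-2), a (((i + t) % n + 1 : ℕ) : Fin (n + 2)) := by
  rw [arcT, Finset.sum_image]
  intro t1 h1 t2 h2 h
  rw [Finset.mem_coe, Finset.mem_range] at h1 h2
  have hv1 : (i + t1) % n + 1 < n + 2 := by have := Nat.mod_lt (i+t1) hn; omega
  have hv2 : (i + t2) % n + 1 < n + 2 := by have := Nat.mod_lt (i+t2) hn; omega
  have := congrArg Fin.val h
  rw [val_cast_of_lt' hv1, val_cast_of_lt' hv2] at this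
  have hmod : (i + t1) % n = (i + t2) % n := by omega
  have h1' : t1 % n = t2 % n := Nat.ModEq.add_left_cancel' i hmod
  rwa [Nat.mod_eq_of_lt (by omega), Nat.mod_eq_of_lt (by omega)] at h1'

lemma total_sum (n : ℕ) (a : Fin (n+2) → ℕ) :
    ∑ i, a i = a 0 + (∑ v ∈ Finset.range n, a ((v+1 : ℕ) : Fin (n+2)))
      + a ((n+1 : ℕ) : Fin (n+2)) := by
  have h : ∑ i, a i = ∑ v ∈ Finset.range (n+2), a ((v : ℕ) : Fin (n+2)) := by
    rw [← Fin.sum_univ_eq_sum_range]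
    simp [Fin.cast_val_eq_self]
  rw [h, Finset.sum_range_succ, Finset.sum_range_succ']
  simp only [Nat.cast_zero]
  ring


/-- Integer-programming form of the odd case: for `k ≥ 3` and `s ≥ 1`, the minimum of
`Σ a_i` over non-negative integer tuples `a = (a_0,…,a_{2k})` satisfying
`a_0 + Σ_{i∈S} a_i ≥ s(2k-3)` and `a_{2k} + Σ_{i∈S} a_i ≥ s(2k-3)` for every arc `S`
of `2k-3` consecutive vertices of the `(2k-1)`-cycle, equals `s(2k-1)`. -/
theorem ip_odd_case (k s : ℕ) (hk : 3 ≤ k) (hs : 1 ≤ s) :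
    sInf {d : ℕ | ∃ a : Fin (2 * k - 1 + 2) → ℕ, (∑ i, a i) = d ∧
        ∀ i < 2 * k - 1,
          s * (2 * k - 3) ≤ a 0 + ∑ j ∈ arcT (2 * k - 1) i, a j ∧
          s * (2 * k - 3) ≤ a ((2 * k : ℕ) : Fin (2 * k - 1 + 2)) +
            ∑ j ∈ arcT (2 * k - 1) i, a j}
      = s * (2 * k - 1) := by
  set n := 2 * k - 1 with hn_def
  have hn5 : 5 ≤ n := by omega
  have hn0 : 0 < n := by omega
  have harc2 : 2 * k - 3 = n - 2 := by omega
  have hn2k : (2 * k : ℕ) = n + 1 := by omega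
  simp only [harc2, hn2k]
  -- mid vertices are not apexes
  have hmid : ∀ v : ℕ, 1 ≤ v → v ≤ n →
      ¬(((v : ℕ) : Fin (n+2)) = 0 ∨ ((v : ℕ) : Fin (n+2)) = ((n+1 : ℕ) : Fin (n+2))) := by
    intro v h1 h2 hor
    rcases hor with h | h
    · have := congrArg Fin.val h
      rw [val_cast_of_lt' (by omega)] at this
      simp at this; omega
    · have := congrArg Fin.val h
      rw [val_cast_of_lt' (by omega), val_cast_of_lt' (by omega)] at this
      omega
  -- witness
  set a₀ : Fin (n+2) → ℕ :=
    fun j => if j = 0 ∨ j = ((n+1 : ℕ) : Fin (n+2)) then 0 else s with ha₀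
  have ha0 : a₀ 0 = 0 := by simp [ha₀]
  have haN : a₀ ((n+1 : ℕ) : Fin (n+2)) = 0 := by simp [ha₀]
  have hamid : ∀ v : ℕ, 1 ≤ v → v ≤ n → a₀ ((v : ℕ) : Fin (n+2)) = s := by
    intro v h1 h2
    simp only [ha₀, if_neg (hmid v h1 h2)]
  have harcsum : ∀ i, ∑ j ∈ arcT n i, a₀ j = (n-2) * s := by
    intro i
    rw [arcT_sum n i hn0]
    rw [Finset.sum_congr rfl (fun t ht => hamid ((i+t) % n + 1) (by omega)
      (by have := Nat.mod_lt (i+t) hn0; omega))]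
    rw [Finset.sum_const, Finset.card_range, smul_eq_mul]
  have hmem : s * n ∈ {d : ℕ | ∃ a : Fin (n + 2) → ℕ, (∑ i, a i) = d ∧
      ∀ i < n, s * (n - 2) ≤ a 0 + ∑ j ∈ arcT n i, a j ∧
        s * (n - 2) ≤ a (((n + 1 : ℕ) : Fin (n + 2))) + ∑ j ∈ arcT n i, a j} := by
    refine ⟨a₀, ?_, ?_⟩
    · rw [total_sum, ha0, haN]
      rw [Finset.sum_congr rfl (fun v hv => hamid (v+1) (by omega)
        (by rw [Finset.mem_range] at hv; omega))]
      rw [Finset.sum_const, Finset.card_range, smul_eq_mul]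
      rw [mul_comm]; ring
    · intro i hi
      rw [harcsum, ha0, haN]
      constructor <;> simp [mul_comm]
  apply le_antisymm (Nat.sInf_le hmem)
  apply le_csInf ⟨_, hmem⟩
  rintro d ⟨a, hsum, hcon⟩
  -- lower bound
  set b := a 0 with hb
  set c := a ((n+1 : ℕ) : Fin (n+2)) with hc
  set A := ∑ v ∈ Finset.range n, a ((v+1 : ℕ) : Fin (n+2)) with hA
  have htot : d = b + A + c := by rw [← hsum, total_sum]
  have key : ∀ x : ℕ, (∀ i < n, s * (n-2) ≤ x + ∑ j ∈ arcT n i, a j) →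
      n * (s * (n-2)) ≤ n * x + (n-2) * A := by
    intro x hx
    have h1 : ∑ i ∈ Finset.range n, (s * (n-2)) ≤
        ∑ i ∈ Finset.range n, (x + ∑ j ∈ arcT n i, a j) :=
      Finset.sum_le_sum (fun i hi => hx i (Finset.mem_range.1 hi))
    rw [Finset.sum_const, Finset.card_range, smul_eq_mul] at h1
    rw [Finset.sum_add_distrib, Finset.sum_const, Finset.card_range, smul_eq_mul] at h1
    have h2 : ∑ i ∈ Finset.range n, ∑ j ∈ arcT n i, a j = (n-2) * A := by
      rw [Finset.sum_congr rfl (fun i _ => arcT_sum n i hn0 a)]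
      rw [Finset.sum_comm]
      rw [Finset.sum_congr rfl (fun t _ =>
        shift_sum n t hn0 (fun v => a ((v + 1 : ℕ) : Fin (n+2))))]
      rw [Finset.sum_const, Finset.card_range, smul_eq_mul]
    rwa [h2] at h1
  have H1 := key b (fun i hi => (hcon i hi).1)
  have H2 := key c (fun i hi => (hcon i hi).2)
  rw [htot]
  by_cases hAbig : s * n ≤ A
  · omega
  · push_neg at hAbig
    obtain ⟨r, hr⟩ : ∃ r, A + r = s * n := ⟨s * n - A, by omega⟩
    have e1 : n * (s * (n-2)) = (n-2) * A + (n-2) * r := by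
      rw [← Nat.mul_add, hr]; ring
    have hb' : (n-2) * r ≤ n * b := by
      rw [e1] at H1
      omega
    have hc' : (n-2) * r ≤ n * c := by
      rw [e1] at H2
      omega
    have m2 : n * r ≤ (n-2) * r + (n-2) * r := by
      calc n * r ≤ ((n-2) + (n-2)) * r := Nat.mul_le_mul_right _ (by omega)
        _ = (n-2) * r + (n-2) * r := by ring
    have m3 : n * r ≤ n * (b + c) := by
      rw [Nat.mul_add]
      exact le_trans m2 (Nat.add_le_add hb' hc')
    have hbc : r ≤ b + c := Nat.le_of_mul_le_mul_left m3 hn0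
    omega
end
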